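/- For any graph G on n ≥ 1 vertices, c₂(G) is strictly greater than the average cut-rank E_ρ(G) = 2^{-n} Σ_{X ⊆ V(G)} ρ_G(X), provided G has at least one edge. -/

import Mathlib

/-- The cut-rank of a vertex subset `X` in `G`: the rank over `F₂` of the
`X × (V ∖ X)` biadjacency matrix of `G`. -/
noncomputable def cutRank {V : Type*} [Fintype V] [DecidableEq V]
    (G : SimpleGraph V) [DecidableRel G.Adj] (X : Finset V) : ℕ :=
  Matrix.rank (Matrix.of (fun (i : {x // x ∈ X}) (j : {y // y ∈ Xᶜ}) =>
    if G.Adj i.1 j.1 then (1 : ZMod 2) else 0))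

lemma myRankAddLe {m n : Type*} [Fintype m] [Fintype n] (A B : Matrix m n (ZMod 2)) :
    (A + B).rank ≤ A.rank + B.rank := by
  classical
  rw [Matrix.rank, Matrix.rank, Matrix.rank, Matrix.mulVecLin_add]
  refine le_trans (Submodule.finrank_mono ?_) (Submodule.finrank_add_le_finrank_add_finrank _ _)
  rintro x ⟨y, rfl⟩
  rw [LinearMap.add_apply]
  exact Submodule.add_mem_sup (LinearMap.mem_range_self _ y) (LinearMap.mem_range_self _ y)

lemma myRankSumLe {m n ι : Type*} [Fintype m] [Fintype n] (s : Finset ι)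
    (f : ι → Matrix m n (ZMod 2)) :
    (∑ i ∈ s, f i).rank ≤ ∑ i ∈ s, (f i).rank := by
  classical
  induction s using Finset.induction with
  | empty => simp [Matrix.rank_zero]
  | @insert a s h ih =>
      rw [Finset.sum_insert h, Finset.sum_insert h]
      exact (myRankAddLe _ _).trans (Nat.add_le_add_left ih _)

lemma myRankVecMulVec {m n : Type*} [Fintype m] [Fintype n] [DecidableEq n]
    (w : m → ZMod 2) (v : n → ZMod 2) : (Matrix.vecMulVec w v).rank ≤ 1 := by
  rw [Matrix.vecMulVec_eq (Fin 1)]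
  exact (Matrix.rank_mul_le_left _ _).trans
    ((Matrix.rank_le_card_width _).trans (le_of_eq (by simp [Fintype.card_fin])))

lemma natCastZMod2 (N : ℕ) : (N : ZMod 2) = if Odd N then 1 else 0 := by
  have h2 : (N : ZMod 2) = ((N % 2 : ℕ) : ZMod 2) := (ZMod.natCast_mod N 2).symm
  rcases Nat.even_or_odd N with h | h
  · rw [h2, Nat.even_iff.mp h]; simp [Nat.not_odd_iff_even.mpr h]
  · rw [h2, Nat.odd_iff.mp h]; simp [h]

lemma cutRank_le_of_system {V : Type*} [Fintype V] [DecidableEq V]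
    (G : SimpleGraph V) [DecidableRel G.Adj] {d : ℕ} (S : Fin d → Finset V)
    (hS : ∀ u v : V, u ≠ v →
      (G.Adj u v ↔
        Odd ((Finset.univ.filter (fun i : Fin d => u ∈ S i ∧ v ∈ S i)).card)))
    (X : Finset V) : cutRank G X ≤ d := by
  classical
  have hM : (Matrix.of (fun (i : {x // x ∈ X}) (j : {y // y ∈ Xᶜ}) =>
      if G.Adj i.1 j.1 then (1 : ZMod 2) else 0)) =
      ∑ k : Fin d, Matrix.vecMulVec
        (fun i : {x // x ∈ X} => if i.1 ∈ S k then (1 : ZMod 2) else 0)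
        (fun j : {y // y ∈ Xᶜ} => if j.1 ∈ S k then (1 : ZMod 2) else 0) := by
    ext i j
    have hij : i.1 ≠ j.1 := by
      intro h
      have := j.2
      rw [← h, Finset.mem_compl] at this
      exact this i.2
    have key := hS i.1 j.1 hij
    simp only [Matrix.sum_apply, Matrix.vecMulVec_apply, Matrix.of_apply, ite_mul, one_mul,
      zero_mul]
    have : ∀ k : Fin d, (if i.1 ∈ S k then (if j.1 ∈ S k then (1 : ZMod 2) else 0) else 0)
        = if (i.1 ∈ S k ∧ j.1 ∈ S k) then (1 : ZMod 2) else 0 := by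
      intro k; by_cases h1 : i.1 ∈ S k <;> by_cases h2 : j.1 ∈ S k <;> simp [h1, h2]
    rw [Finset.sum_congr rfl (fun k _ => this k), Finset.sum_boole, natCastZMod2]
    by_cases h : G.Adj i.1 j.1
    · simp [h, key.mp h]
    · rw [if_neg h, if_neg (fun ho => h (key.mpr ho))]
  rw [cutRank, hM]
  calc (∑ k : Fin d, Matrix.vecMulVec
        (fun i : {x // x ∈ X} => if i.1 ∈ S k then (1 : ZMod 2) else 0)
        (fun j : {y // y ∈ Xᶜ} => if j.1 ∈ S k then (1 : ZMod 2) else 0)).rank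
      ≤ ∑ k : Fin d, (Matrix.vecMulVec
        (fun i : {x // x ∈ X} => if i.1 ∈ S k then (1 : ZMod 2) else 0)
        (fun j : {y // y ∈ Xᶜ} => if j.1 ∈ S k then (1 : ZMod 2) else 0)).rank :=
        myRankSumLe _ _
    _ ≤ ∑ _k : Fin d, 1 := Finset.sum_le_sum (fun k _ => myRankVecMulVec _ _)
    _ = d := by simp

lemma cutRank_empty {V : Type*} [Fintype V] [DecidableEq V]
    (G : SimpleGraph V) [DecidableRel G.Adj] : cutRank G (∅ : Finset V) = 0 := by
  have h := Matrix.rank_le_card_height (Matrix.of (fun (i : {x // x ∈ (∅ : Finset V)})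
    (j : {y // y ∈ (∅ : Finset V)ᶜ}) => if G.Adj i.1 j.1 then (1 : ZMod 2) else 0))
  simpa [cutRank] using h

theorem scNumber_gt_average_cutRank {V : Type*} [Fintype V] [DecidableEq V]
    (G : SimpleGraph V) [DecidableRel G.Adj]
    (hn : 1 ≤ Fintype.card V) (hE : G.edgeSet.Nonempty) :
    ((sInf {d : ℕ | ∃ S : Fin d → Finset V,
      ∀ u v : V, u ≠ v →
        (G.Adj u v ↔
          Odd ((Finset.univ.filter (fun i : Fin d => u ∈ S i ∧ v ∈ S i)).card))} : ℕ) : ℝ)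
      > (∑ X : Finset V, (cutRank G X : ℝ)) / 2 ^ (Fintype.card V) := by
  classical
  set T := {d : ℕ | ∃ S : Fin d → Finset V,
      ∀ u v : V, u ≠ v →
        (G.Adj u v ↔
          Odd ((Finset.univ.filter (fun i : Fin d => u ∈ S i ∧ v ∈ S i)).card))} with hT
  -- an adjacent pair
  obtain ⟨e, he⟩ := hE
  induction e using Sym2.inductionOn with
  | hf a b =>
  rw [SimpleGraph.mem_edgeSet] at he
  have hab : a ≠ b := G.ne_of_adj he
  -- T is nonempty
  have hTne : T.Nonempty := by
    refine ⟨G.edgeFinset.card, fun i =>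
      Finset.univ.filter (· ∈ ((G.edgeFinset.equivFin.symm i : Sym2 V))), ?_⟩
    intro u v huv
    set e := G.edgeFinset.equivFin
    have hcount : (Finset.univ.filter (fun i : Fin G.edgeFinset.card =>
        u ∈ Finset.univ.filter (· ∈ ((e.symm i : Sym2 V))) ∧
        v ∈ Finset.univ.filter (· ∈ ((e.symm i : Sym2 V))))).card
        = Fintype.card {s : G.edgeFinset // u ∈ (s : Sym2 V) ∧ v ∈ (s : Sym2 V)} := by
      rw [← Fintype.card_subtype]
      exact Fintype.card_congr (Equiv.subtypeEquiv e.symm (fun i => by simp))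
    constructor
    · intro hadj
      rw [hcount]
      have : Fintype.card {s : G.edgeFinset // u ∈ (s : Sym2 V) ∧ v ∈ (s : Sym2 V)} = 1 := by
        rw [Fintype.card_eq_one_iff]
        refine ⟨⟨⟨s(u, v), by simp [SimpleGraph.mem_edgeFinset, hadj]⟩, by simp⟩, ?_⟩
        rintro ⟨⟨s, hs⟩, hus, hvs⟩
        have h1 : s = s(u, v) := (Sym2.mem_and_mem_iff huv).mp ⟨hus, hvs⟩
        exact Subtype.ext (Subtype.ext h1)
      rw [this]; exact odd_one
    · intro hodd
      rw [hcount] at hodd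
      by_contra hadj
      haveI : IsEmpty {s : G.edgeFinset // u ∈ (s : Sym2 V) ∧ v ∈ (s : Sym2 V)} := by
        refine ⟨?_⟩
        rintro ⟨⟨s, hs⟩, hus, hvs⟩
        have h1 : s = s(u, v) := (Sym2.mem_and_mem_iff huv).mp ⟨hus, hvs⟩
        subst h1
        exact hadj (by simpa using hs)
      rw [Fintype.card_eq_zero] at hodd
      simp at hodd
  set c := sInf T with hc
  have hcmem : c ∈ T := Nat.sInf_mem hTne
  have hcpos : 0 < c := by
    rcases Nat.eq_zero_or_pos c with h | h
    swap
    · exact h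
    · exfalso
      rw [h] at hcmem
      obtain ⟨S, hS⟩ := hcmem
      have := (hS a b hab).mp he
      simp at this
  obtain ⟨S, hS⟩ := hcmem
  -- main bound
  have hbound : ∀ X : Finset V, cutRank G X ≤ c := cutRank_le_of_system G S hS
  have h2n : (0 : ℝ) < 2 ^ (Fintype.card V) := by positivity
  rw [gt_iff_lt, div_lt_iff₀ h2n]
  have hcard : (Finset.univ : Finset (Finset V)).card = 2 ^ (Fintype.card V) := by
    simp [Fintype.card_finset]
  have hmem : (∅ : Finset V) ∈ (Finset.univ : Finset (Finset V)) := Finset.mem_univ _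
  have hsplit : ∑ X : Finset V, (cutRank G X : ℝ)
      = (cutRank G (∅ : Finset V) : ℝ)
        + ∑ X ∈ Finset.univ.erase (∅ : Finset V), (cutRank G X : ℝ) :=
    (Finset.add_sum_erase _ _ hmem).symm
  have hrest : ∑ X ∈ Finset.univ.erase (∅ : Finset V), (cutRank G X : ℝ)
      ≤ (2 ^ (Fintype.card V) - 1) * c := by
    calc ∑ X ∈ Finset.univ.erase (∅ : Finset V), (cutRank G X : ℝ)
        ≤ ∑ _X ∈ Finset.univ.erase (∅ : Finset V), (c : ℝ) := by
          refine Finset.sum_le_sum (fun X _ => ?_)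
          exact_mod_cast hbound X
      _ = ((Finset.univ.erase (∅ : Finset V)).card : ℝ) * c := by
          rw [Finset.sum_const, nsmul_eq_mul]
      _ = (2 ^ (Fintype.card V) - 1) * c := by
          rw [Finset.card_erase_of_mem hmem, hcard]
          have h1 : 1 ≤ 2 ^ (Fintype.card V) := Nat.one_le_two_pow
          push_cast [Nat.cast_sub h1]
          ring
  have hc1 : (1 : ℝ) ≤ c := by exact_mod_cast hcpos
  calc ∑ X : Finset V, (cutRank G X : ℝ)
      ≤ (2 ^ (Fintype.card V) - 1) * c := by
        rw [hsplit, cutRank_empty]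
        simpa using hrest
    _ < c * 2 ^ (Fintype.card V) := by nlinarith
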